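/- arXiv:1906.02602 — 3 statements merged into one kernel-verified Lean document; each statement's English description precedes it below -/
import Mathlib

section
/- For each 1 ≤ i ≤ ⌊n/2⌋, the i-th row of the matrix T_b contains a subset of at least n − gcd(n, i) entries whose corresponding random variables are independent and identically distributed (over the uniform choice of b). -/
/-!
Take `J = {j | gcd(n,i) ≤ j.val}`. Every orbit of `j ↦ j + i` is a coset of the subgroup
generated by `gcd(n,i)`, so it leaves `J` at its unique representative below `gcd(n,i)`.
Hence `b` is recovered from `(b j - b (j + i))_{j ∈ J}` together with `(b j)_{j ∉ J}` by walking
each orbit back from that point: the map `b ↦ this tuple` is a bijection of `ℤ_n^{ℤ_n}`. So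
for uniform `b` the differences `b j - b (j + i)`, `j ∈ J`, are independent and uniform on
`ℤ_n`, so their cyclic absolute values `T_b(i,j)` are i.i.d. with law `m_s / n`.
-/

/-- The `n`-cyclic absolute value of `d ∈ ℤ_n`. -/
def cycAbs (n : ℕ) (d : ZMod n) : ℕ := min d.val (-d).val

/-- The entry `T_b(i,j) = |b(j) − b(j+i)|_n` of the matrix `T_b`. -/
def Tb (n : ℕ) (b : ZMod n → ZMod n) (i : ℕ) (j : ZMod n) : ℕ :=
  cycAbs n (b j - b (j + (i : ZMod n)))

/-- `m_s`, the number of residues `d ∈ ℤ_n` with `|d|_n = s`. -/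
def mval (n : ℕ) [NeZero n] (s : ℕ) : ℕ :=
  (Finset.univ.filter (fun d : ZMod n => cycAbs n d = s)).card

open Finset Function

section DiffAlong

variable {α G : Type*} [DecidableEq α] [AddGroup G] (J : Finset α) (σ : α → α)

def diffAlong (b : α → G) (j : α) : G := if j ∈ J then b j - b (σ j) else b j

variable {J σ}

theorem diffAlong_injective (hσ : ∀ j, ∃ t, σ^[t] j ∉ J) :
    Injective (diffAlong J σ : (α → G) → α → G) := by
  intro b b' h
  have key : ∀ t j, σ^[t] j ∉ J → b j = b' j := by
    intro t
    induction t with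
    | zero =>
      intro j hj
      rw [iterate_zero_apply] at hj
      simpa [diffAlong, hj] using congrFun h j
    | succ t ih =>
      intro j hj
      by_cases hjJ : j ∈ J
      · have hσj : b (σ j) = b' (σ j) := ih (σ j) (by rwa [← iterate_succ_apply])
        have hdiff := congrFun h j
        simp only [diffAlong, if_pos hjJ, hσj] at hdiff
        exact sub_left_injective hdiff
      · simpa [diffAlong, hjJ] using congrFun h j
  funext j
  obtain ⟨t, ht⟩ := hσ j
  exact key t j ht

theorem card_filter_forall_sub_mem [Fintype α] [Fintype G] [DecidableEq G]
    (hσ : ∀ j, ∃ t, σ^[t] j ∉ J) (S : α → Finset G) :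
    #{b : α → G | ∀ j ∈ J, b j - b (σ j) ∈ S j} = #{c : α → G | ∀ j ∈ J, c j ∈ S j} := by
  have hbij := Finite.injective_iff_bijective.mp (diffAlong_injective (G := G) hσ)
  refine card_equiv (Equiv.ofBijective _ hbij) fun b => ?_
  simp only [mem_filter, mem_univ, true_and, Equiv.ofBijective_apply]
  exact forall₂_congr fun j hj => by rw [diffAlong, if_pos hj]

end DiffAlong

theorem card_filter_forall_mem {α β : Type*} [Fintype α] [DecidableEq α] [Fintype β]
    [DecidableEq β] (J : Finset α) (S : α → Finset β) :
    #{c : α → β | ∀ j ∈ J, c j ∈ S j} = (∏ j ∈ J, #(S j)) * Fintype.card β ^ #Jᶜ := by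
  have hpi : ({c : α → β | ∀ j ∈ J, c j ∈ S j} : Finset _)
      = Fintype.piFinset fun j => if j ∈ J then S j else univ := by
    ext c
    simp only [mem_filter, mem_univ, true_and, Fintype.mem_piFinset]
    refine ⟨fun h j => ?_, fun h j hj => by simpa [hj] using h j⟩
    split_ifs with hj
    exacts [h j hj, mem_univ _]
  rw [hpi, Fintype.card_piFinset, prod_apply_ite, prod_const, card_univ, filter_mem_eq_inter, filter_notMem_eq_sdiff, univ_inter, compl_eq_univ_sdiff]

theorem card_filter_forall_mem_div {α β : Type*} [Fintype α] [DecidableEq α] [Fintype β]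
    [DecidableEq β] [Nonempty β] (J : Finset α) (S : α → Finset β) :
    (#{c : α → β | ∀ j ∈ J, c j ∈ S j} : ℚ) / Fintype.card β ^ Fintype.card α
      = ∏ j ∈ J, (#(S j) : ℚ) / Fintype.card β := by
  have hβ : (Fintype.card β : ℚ) ≠ 0 := by positivity
  rw [card_filter_forall_mem, prod_div_distrib, prod_const, ← card_add_card_compl J]
  push_cast
  rw [pow_add, mul_div_mul_right _ _ (pow_ne_zero _ hβ)]

namespace ZMod

theorem exists_val_add_mul_lt_gcd {n : ℕ} [NeZero n] (i : ℕ) (j : ZMod n) :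
    ∃ t : ℕ, (j + t * i).val < n.gcd i := by
  set g := n.gcd i
  have hg : 0 < g := Nat.gcd_pos_of_pos_left _ (NeZero.pos n)
  have hgn : g ≤ n := Nat.gcd_le_left _ (NeZero.pos n)
  have hbezout : (g : ZMod n) = i * (n.gcdB i : ZMod n) := by
    simpa using congrArg (Int.cast : ℤ → ZMod n) (Nat.gcd_eq_gcd_ab n i)
  set q := j.val / g
  set c : ZMod n := -(q * n.gcdB i)
  refine ⟨c.val, ?_⟩
  have hj : j = ((j.val % g : ℕ) : ZMod n) + g * q := by
    rw [← Nat.cast_mul, ← Nat.cast_add, Nat.mod_add_div, natCast_zmod_val]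
  have hstep : j + (c.val : ZMod n) * i = ((j.val % g : ℕ) : ZMod n) := by
    rw [natCast_zmod_val]
    nth_rewrite 1 [hj]
    rw [hbezout]
    ring
  rw [hstep, val_cast_of_lt ((Nat.mod_lt _ hg).trans_le hgn)]
  exact Nat.mod_lt _ hg

end ZMod

theorem row_contains_iid_subset_general (n : ℕ) [NeZero n] (i : ℕ) :
    ∃ J : Finset (ZMod n), n - Nat.gcd n i ≤ J.card ∧
      ∀ s : ZMod n → ℕ,
        ((Finset.univ.filter
            (fun b : ZMod n → ZMod n => ∀ j ∈ J, Tb n b i j = s j)).card : ℚ) / n ^ n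
          = ∏ j ∈ J, (mval n (s j) : ℚ) / n := by
  set J : Finset (ZMod n) := {j | n.gcd i ≤ j.val}
  have hJc : #Jᶜ ≤ n.gcd i := by
    refine (card_le_card_of_injOn (t := range (n.gcd i)) ZMod.val (fun j hj => ?_)
      (ZMod.val_injective n).injOn).trans_eq (card_range _)
    simpa [J] using hj
  refine ⟨J, by rw [card_compl, ZMod.card] at hJc; omega, fun s => ?_⟩
  have horbit : ∀ j, ∃ t, (· + (i : ZMod n))^[t] j ∉ J := fun j => by
    simpa [J, add_right_iterate] using ZMod.exists_val_add_mul_lt_gcd i j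
  set S : ZMod n → Finset (ZMod n) := fun j => {d | cycAbs n d = s j}
  have hcount : #{b : ZMod n → ZMod n | ∀ j ∈ J, Tb n b i j = s j}
      = #{c : ZMod n → ZMod n | ∀ j ∈ J, c j ∈ S j} := by
    rw [← card_filter_forall_sub_mem horbit S]
    congr 1
    ext b
    rw [mem_filter, mem_filter]
    simp [Tb, S]
  rw [hcount]
  simpa [ZMod.card, mval, S] using card_filter_forall_mem_div J S

/-- For each `1 ≤ i ≤ ⌊n/2⌋`, row `i` of `T_b` contains at least `n − gcd(n,i)` entries
which are i.i.d. random variables (their joint law factorizes into identical marginals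
`m_s/n`). -/
theorem row_contains_iid_subset (n : ℕ) [NeZero n] (i : ℕ) (hi1 : 1 ≤ i) (hi2 : i ≤ n / 2) :
    ∃ J : Finset (ZMod n), n - Nat.gcd n i ≤ J.card ∧
      ∀ s : ZMod n → ℕ,
        ((Finset.univ.filter
            (fun b : ZMod n → ZMod n => ∀ j ∈ J, Tb n b i j = s j)).card : ℚ) / n ^ n
          = ∏ j ∈ J, (mval n (s j) : ℚ) / n :=
  row_contains_iid_subset_general n i
end

section
/- Let R_i(b) denote the number of distinct values among the entries T_b(i,0), …, T_b(i,n−1) of row i of T_b. Then E[R_i] ≥ ⌊n/2⌋ (1 − e^{−1}) − 1. -/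
/-- `R_i(b)`: the number of distinct values among the entries of row `i` of `T_b`. -/
def Rrow (n : ℕ) [NeZero n] (b : ZMod n → ZMod n) (i : ℕ) : ℕ :=
  (Finset.univ.image (fun j : ZMod n => Tb n b i j)).card

/-!
Fix a value `1 ≤ v < n/2` and count the `b` whose row `i` avoids `v`, i.e. with
`b j - b (j + i) ∉ {v, -v}` for all `j`. Record `b` on the residues `j < i` and the differences
`b (j - i) - b j` elsewhere: this encoding is injective (recover `b j` by strong induction on `j`),
and for an avoiding `b` every recorded difference misses two residues. Hence at most
`n ^ i (n - 2) ^ (n - i) ≤ n ^ n e⁻¹` functions avoid `v`, since `n - i ≥ n / 2`. So each of the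
`⌊n/2⌋ - 1` values `v` occurs in row `i` with probability at least `1 - e⁻¹`, and linearity of
expectation gives the bound.
-/

open Finset Function

lemma cycAbs_natCast {n v : ℕ} [NeZero n] (h : 2 * v ≤ n) : cycAbs n v = v := by
  have hv : (v : ZMod n).val = v := ZMod.val_natCast_of_lt (by have := NeZero.pos n; omega)
  unfold cycAbs
  rw [ZMod.neg_val, hv]
  split_ifs with h0
  · rw [h0, ZMod.val_zero] at hv; omega
  · omega

lemma cycAbs_neg (n : ℕ) (d : ZMod n) : cycAbs n (-d) = cycAbs n d := by
  rw [cycAbs, cycAbs, neg_neg, min_comm]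

lemma ZMod.card_filter_val_lt {n k : ℕ} [NeZero n] (hk : k ≤ n) :
    #{j : ZMod n | j.val < k} = k := by
  obtain ⟨m, rfl⟩ : ∃ m, n = m + 1 := Nat.exists_eq_succ_of_ne_zero (NeZero.ne n)
  exact Fin.card_filter_val_lt.trans (min_eq_right hk)

def shiftDiff {n : ℕ} {G : Type*} [AddGroup G] (d : ZMod n) (b : ZMod n → G) (j : ZMod n) : G :=
  if j.val < d.val then b j else b (j - d) - b j

section shiftDiff

variable {n : ℕ} [NeZero n] {G : Type*} [AddGroup G] {d : ZMod n}

lemma shiftDiff_injective (hd : d ≠ 0) :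
    Injective (shiftDiff d : (ZMod n → G) → ZMod n → G) := by
  intro b b' h
  suffices ∀ k, ∀ j : ZMod n, j.val = k → b j = b' j from funext fun j => this _ j rfl
  intro k
  induction k using Nat.strong_induction_on with
  | _ k ih =>
    rintro j rfl
    have hj := congrFun h j
    by_cases hlt : j.val < d.val
    · simpa [shiftDiff, hlt] using hj
    · have hd0 := ZMod.val_pos.mpr hd
      have hprev : b (j - d) = b' (j - d) :=
        ih _ (by rw [ZMod.val_sub (by omega)]; omega) _ rfl
      simp only [shiftDiff, if_neg hlt, hprev] at hj
      exact sub_right_injective hj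

lemma card_filter_forall_sub_notMem_le [Fintype G] [DecidableEq G] (hd : d ≠ 0)
    (A : Finset G) :
    #{b : ZMod n → G | ∀ j, b j - b (j + d) ∉ A}
      ≤ Fintype.card G ^ d.val * (Fintype.card G - #A) ^ (n - d.val) := by
  calc #{b : ZMod n → G | ∀ j, b j - b (j + d) ∉ A}
      ≤ #(Fintype.piFinset fun j : ZMod n => if j.val < d.val then univ else Aᶜ) := by
        refine card_le_card_of_injOn (shiftDiff d) (fun b hb => ?_) (shiftDiff_injective hd).injOn
        simp only [coe_filter, mem_univ, true_and, Set.mem_ofPred_eq] at hb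
        rw [mem_coe, Fintype.mem_piFinset]
        intro j
        by_cases hlt : j.val < d.val
        · simp [hlt]
        · simpa [shiftDiff, hlt] using hb (j - d)
    _ = Fintype.card G ^ d.val * (Fintype.card G - #A) ^ (n - d.val) := by
        have hk := (ZMod.val_lt d).le
        simp only [Fintype.card_piFinset, apply_ite card, card_univ, card_compl]
        rw [prod_ite, prod_const, prod_const, ZMod.card_filter_val_lt hk, filter_not,
          card_sdiff_of_subset (filter_subset _ _), ZMod.card_filter_val_lt hk, card_univ,
          ZMod.card]

end shiftDiff

lemma pow_mul_sub_two_pow_le_exp_neg_one {n k : ℕ} (hn : 2 ≤ n) (hk : 2 * k ≤ n) :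
    (n : ℝ) ^ k * ((n : ℝ) - 2) ^ (n - k) ≤ (n : ℝ) ^ n * Real.exp (-1) := by
  have hn0 : (0 : ℝ) < n := by positivity
  have hdecay : (1 - 2 / (n : ℝ)) ^ (n - k) ≤ Real.exp (-1) :=
    calc (1 - 2 / (n : ℝ)) ^ (n - k) ≤ Real.exp (-(2 / n)) ^ (n - k) := by
          gcongr
          · rw [sub_nonneg, div_le_one hn0]; exact_mod_cast hn
          · exact Real.one_sub_le_exp_neg _
      _ = Real.exp (-(2 * (n - k : ℕ) / n)) := by rw [← Real.exp_nat_mul]; ring_nf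
      _ ≤ Real.exp (-1) := by
          gcongr
          rw [le_div_iff₀ hn0]
          push_cast [show k ≤ n by omega]
          have : (2 * k : ℝ) ≤ n := by exact_mod_cast hk
          linarith
  calc (n : ℝ) ^ k * ((n : ℝ) - 2) ^ (n - k)
      = (n : ℝ) ^ n * (1 - 2 / (n : ℝ)) ^ (n - k) := by
        rw [show (n : ℝ) - 2 = n * (1 - 2 / n) by field_simp, mul_pow, ← mul_assoc, ← pow_add,
          Nat.add_sub_cancel' (by omega)]
    _ ≤ (n : ℝ) ^ n * Real.exp (-1) := by gcongr

lemma sum_card_filter_mem_le_sum_card {β γ : Type*} [Fintype β] [DecidableEq γ]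
    (S : β → Finset γ) (V : Finset γ) :
    ∑ v ∈ V, #{b | v ∈ S b} ≤ ∑ b, #(S b) :=
  calc ∑ v ∈ V, #{b | v ∈ S b} = ∑ b, #{v ∈ V | v ∈ S b} := by
        simp only [card_filter]; exact sum_comm
    _ ≤ ∑ b, #(S b) := sum_le_sum fun b _ => card_le_card fun v hv => (mem_filter.1 hv).2

lemma card_filter_forall_Tb_ne_le {n i v : ℕ} [NeZero n] (hi1 : 1 ≤ i) (hi2 : i ≤ n / 2)
    (hv1 : 1 ≤ v) (hv2 : 2 * v < n) :
    (#{b : ZMod n → ZMod n | ∀ j, Tb n b i j ≠ v} : ℝ) ≤ (n : ℝ) ^ n * Real.exp (-1) := by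
  have hi : (i : ZMod n).val = i := ZMod.val_natCast_of_lt (by omega)
  have hd : (i : ZMod n) ≠ 0 := fun h => by rw [h, ZMod.val_zero] at hi; omega
  have hv : (v : ZMod n).val = v := ZMod.val_natCast_of_lt (by omega)
  set A : Finset (ZMod n) := {(v : ZMod n), -(v : ZMod n)}
  have hA : #A = 2 := by
    refine card_pair fun h => ?_
    have hv0 : (v : ZMod n) ≠ 0 := fun h0 => by rw [h0, ZMod.val_zero] at hv; omega
    have := ZMod.neg_val (v : ZMod n)
    rw [if_neg hv0, ← h, hv] at this
    omega
  have hsub : ({b | ∀ j, Tb n b i j ≠ v} : Finset (ZMod n → ZMod n))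
      ⊆ ({b | ∀ j, b j - b (j + (i : ZMod n)) ∉ A} : Finset (ZMod n → ZMod n)) := by
    intro b
    simp only [mem_filter, mem_univ, true_and]
    intro hb j hj
    apply hb j
    simp only [A, mem_insert, mem_singleton] at hj
    rcases hj with h | h <;> simp only [Tb, h, cycAbs_neg, cycAbs_natCast hv2.le]
  have hcard := (card_le_card hsub).trans (card_filter_forall_sub_notMem_le hd _)
  rw [hA, ZMod.card, hi] at hcard
  calc (#{b : ZMod n → ZMod n | ∀ j, Tb n b i j ≠ v} : ℝ)
      ≤ ((n ^ i * (n - 2) ^ (n - i) : ℕ) : ℝ) := by exact_mod_cast hcard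
    _ = (n : ℝ) ^ i * ((n : ℝ) - 2) ^ (n - i) := by
        rw [Nat.cast_mul, Nat.cast_pow, Nat.cast_pow, Nat.cast_sub (show 2 ≤ n by omega),
          Nat.cast_ofNat]
    _ ≤ (n : ℝ) ^ n * Real.exp (-1) := pow_mul_sub_two_pow_le_exp_neg_one (by omega) (by omega)

lemma le_card_filter_exists_Tb_eq {n i v : ℕ} [NeZero n] (hi1 : 1 ≤ i) (hi2 : i ≤ n / 2)
    (hv1 : 1 ≤ v) (hv2 : 2 * v < n) :
    (n : ℝ) ^ n * (1 - Real.exp (-1)) ≤ #{b : ZMod n → ZMod n | ∃ j, Tb n b i j = v} := by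
  have hsplit : (#{b : ZMod n → ZMod n | ∃ j, Tb n b i j = v} : ℝ)
      + #{b : ZMod n → ZMod n | ∀ j, Tb n b i j ≠ v} = (n : ℝ) ^ n := by
    have := card_filter_add_card_filter_not
      (s := (univ : Finset (ZMod n → ZMod n))) (p := fun b => ∃ j, Tb n b i j = v)
    simp only [not_exists, card_univ, Fintype.card_fun, ZMod.card] at this
    exact_mod_cast this
  linarith [card_filter_forall_Tb_ne_le hi1 hi2 hv1 hv2]

/-- For `b` uniform on `ℳ_n` and `1 ≤ i ≤ ⌊n/2⌋`,
`E[R_i] ≥ ⌊n/2⌋ (1 − e^{−1}) − 1`. -/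
theorem expectation_Rrow_lower_bound (n : ℕ) [NeZero n] (i : ℕ)
    (hi1 : 1 ≤ i) (hi2 : i ≤ n / 2) :
    (∑ b : ZMod n → ZMod n, (Rrow n b i : ℝ)) / (n : ℝ) ^ n
      ≥ ((n / 2 : ℕ) : ℝ) * (1 - Real.exp (-1)) - 1 := by
  set m := n / 2
  have hdouble : ∑ v ∈ Icc 1 (m - 1), #{b : ZMod n → ZMod n | ∃ j, Tb n b i j = v}
      ≤ ∑ b : ZMod n → ZMod n, Rrow n b i := by
    simpa [Rrow] using sum_card_filter_mem_le_sum_card (fun b => univ.image (Tb n b i)) _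
  have hsum : ((m : ℝ) - 1) * ((n : ℝ) ^ n * (1 - Real.exp (-1)))
      ≤ ∑ b : ZMod n → ZMod n, (Rrow n b i : ℝ) :=
    calc ((m : ℝ) - 1) * ((n : ℝ) ^ n * (1 - Real.exp (-1)))
        = ∑ _v ∈ Icc 1 (m - 1), (n : ℝ) ^ n * (1 - Real.exp (-1)) := by
          rw [sum_const, Nat.card_Icc, nsmul_eq_mul, Nat.add_sub_cancel,
            Nat.cast_sub (by omega), Nat.cast_one]
      _ ≤ ∑ v ∈ Icc 1 (m - 1), (#{b : ZMod n → ZMod n | ∃ j, Tb n b i j = v} : ℝ) :=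
          sum_le_sum fun v hv => le_card_filter_exists_Tb_eq hi1 hi2 (mem_Icc.1 hv).1
            (by have := (mem_Icc.1 hv).2; omega)
      _ ≤ _ := by exact_mod_cast hdouble
  have hn : (0 : ℝ) < (n : ℝ) ^ n := pow_pos (Nat.cast_pos.2 (NeZero.pos n)) n
  rw [ge_iff_le, le_div_iff₀ hn]
  nlinarith [Real.exp_pos (-1)]
end

section
/- Let b : ℤ_n → ℤ_n and suppose b ∈ E_row(α) ∩ E_zero(β) for some α, β > 0 with α + β > 1, i.e., every row of T_b has at least α⌊n/2⌋ distinct values and at least β⌊n/2⌋ rows of T_b contain a zero entry. Then the circular automaton A_n(b) = (ℤ_n, {a, b}), where a(i) = (i+1) mod n, is synchronizing. -/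
/-- One step of the circular automaton `A_n(b) = (ℤ_n, {a, b})`:
the letter `false` acts as the cyclic shift `a(q) = q + 1`, the letter `true` acts as `b`. -/
def autoStep (n : ℕ) (b : ZMod n → ZMod n) (q : ZMod n) (letter : Bool) : ZMod n :=
  if letter then b q else q + 1

/-- The action of a word `w ∈ {a,b}*` on a state of `A_n(b)`. -/
def autoAct (n : ℕ) (b : ZMod n → ZMod n) (w : List Bool) (q : ZMod n) : ZMod n :=
  w.foldl (autoStep n b) q

lemma autoAct_append (n : ℕ) (b : ZMod n → ZMod n) (w₁ w₂ : List Bool) (q : ZMod n) :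
    autoAct n b (w₁ ++ w₂) q = autoAct n b w₂ (autoAct n b w₁ q) := by
  simp [autoAct, List.foldl_append]

lemma autoAct_replicate (n : ℕ) (b : ZMod n → ZMod n) (t : ℕ) (q : ZMod n) :
    autoAct n b (List.replicate t false) q = q + (t : ZMod n) := by
  induction t generalizing q with
  | zero => simp [autoAct]
  | succ t ih =>
      rw [List.replicate_succ]
      show autoAct n b (List.replicate t false) (autoStep n b q false) = _
      rw [ih]
      simp [autoStep]
      push_cast
      ring

lemma cycAbs_eq_zero {n : ℕ} [NeZero n] {d : ZMod n} (h : cycAbs n d = 0) : d = 0 := by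
  unfold cycAbs at h
  rcases Nat.min_eq_zero_iff.mp h with h' | h'
  · exact (ZMod.val_eq_zero d).mp h'
  · have := (ZMod.val_eq_zero (-d)).mp h'
    simpa using (neg_eq_zero.mp this)

lemma cycAbs_le_half {n : ℕ} [NeZero n] (d : ZMod n) : cycAbs n d ≤ n / 2 := by
  unfold cycAbs
  by_cases hd : d = 0
  · simp [hd]
  · rw [ZMod.neg_val, if_neg hd]
    have h1 : d.val < n := ZMod.val_lt d
    have h2 : d.val ≠ 0 := fun h => hd ((ZMod.val_eq_zero d).mp h)
    omega

/-- If row `i` has a zero (i.e. some pair at shift `i` is merged by `b`), then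
any pair `{x, x+i}` can be synchronized. -/
lemma merge_of_merged_shift (n : ℕ) [NeZero n] (b : ZMod n → ZMod n) (x : ZMod n) (i : ℕ)
    (h : ∃ j : ZMod n, b j = b (j + (i : ZMod n))) :
    ∃ w : List Bool, autoAct n b w x = autoAct n b w (x + (i : ZMod n)) := by
  obtain ⟨j, hj⟩ := h
  refine ⟨List.replicate (j - x).val false ++ [true], ?_⟩
  rw [autoAct_append, autoAct_append, autoAct_replicate, autoAct_replicate]
  have hc : (((j - x).val : ℕ) : ZMod n) = j - x := ZMod.natCast_rightInverse (j - x)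
  rw [hc]
  have e1 : x + (j - x) = j := by ring
  have e2 : x + (i : ZMod n) + (j - x) = j + (i : ZMod n) := by ring
  rw [e1, e2]
  show autoStep n b j true = autoStep n b (j + (i : ZMod n)) true
  simp [autoStep, hj]

/-- From `cycAbs (q - p) = i` with a merged shift `i`, synchronize the pair `{p, q}`. -/
lemma merge_pair_of_cycAbs (n : ℕ) [NeZero n] (b : ZMod n → ZMod n) (p q : ZMod n) (i : ℕ)
    (hi : cycAbs n (q - p) = i)
    (h : ∃ j : ZMod n, b j = b (j + (i : ZMod n))) :
    ∃ w : List Bool, autoAct n b w p = autoAct n b w q := by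
  unfold cycAbs at hi
  rcases le_total ((q - p).val) ((-(q - p)).val) with hle | hle
  · have : (q - p).val = i := by omega
    have hq : p + (i : ZMod n) = q := by
      rw [← this, ZMod.natCast_rightInverse (q - p)]; ring
    obtain ⟨w, hw⟩ := merge_of_merged_shift n b p i h
    exact ⟨w, by rw [hw, hq]⟩
  · have : (-(q - p)).val = i := by omega
    have hq : q + (i : ZMod n) = p := by
      rw [← this, ZMod.natCast_rightInverse (-(q - p))]; ring
    obtain ⟨w, hw⟩ := merge_of_merged_shift n b q i h
    exact ⟨w, by rw [hw, hq]⟩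

/-- If every row of `T_b` has at least `α⌊n/2⌋` distinct values, and at least `β⌊n/2⌋`
rows of `T_b` contain a zero entry, where `α, β > 0` and `α + β > 1`, then the circular
automaton `A_n(b)` is synchronizing. -/
theorem circular_automaton_synchronizes (n : ℕ) [NeZero n] (b : ZMod n → ZMod n)
    (α β : ℝ) (hα : 0 < α) (hβ : 0 < β) (hαβ : 1 < α + β)
    (hrow : ∀ i ∈ Finset.Icc 1 (n / 2), α * ((n / 2 : ℕ) : ℝ) ≤ (Rrow n b i : ℝ))
    (hzero : β * ((n / 2 : ℕ) : ℝ)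
      ≤ (((Finset.Icc 1 (n / 2)).filter
            (fun i => ∃ j : ZMod n, Tb n b i j = 0)).card : ℝ)) :
    ∃ w : List Bool, ∃ q0 : ZMod n, ∀ q : ZMod n, autoAct n b w q = q0 := by
  classical
  set m := n / 2 with hm
  set Z := (Finset.Icc 1 m).filter (fun i => ∃ j : ZMod n, Tb n b i j = 0) with hZ
  -- a merged shift from a zero entry
  have zero_entry : ∀ i : ℕ, ∀ j : ZMod n, Tb n b i j = 0 → b j = b (j + (i : ZMod n)) := by
    intro i j h
    exact sub_eq_zero.mp (cycAbs_eq_zero (n := n) h)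
  -- pair synchronization for pairs at shift i with 1 ≤ i ≤ m
  have pairA : ∀ (x : ZMod n) (i : ℕ), i ∈ Finset.Icc 1 m →
      ∃ w : List Bool, autoAct n b w x = autoAct n b w (x + (i : ZMod n)) := by
    intro x i hi
    by_cases hz : ∃ j : ZMod n, Tb n b i j = 0
    · obtain ⟨j, hj⟩ := hz
      exact merge_of_merged_shift n b x i ⟨j, zero_entry i j hj⟩
    · -- pigeonhole
      have hm1 : 1 ≤ m := by
        rcases Finset.mem_Icc.mp hi with ⟨h1, h2⟩; omega
      set S := Finset.univ.image (fun j : ZMod n => Tb n b i j) with hS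
      have hScard : α * (m : ℝ) ≤ (S.card : ℝ) := hrow i hi
      have hSsub : S ⊆ Finset.Icc 1 m := by
        intro v hv
        obtain ⟨j, -, hj⟩ := Finset.mem_image.mp hv
        rw [Finset.mem_Icc]
        constructor
        · rcases Nat.eq_zero_or_pos v with h | h
          · exact absurd ⟨j, by rw [hj, h]⟩ hz
          · exact h
        · rw [← hj]; exact cycAbs_le_half _
      have hZsub : Z ⊆ Finset.Icc 1 m := Finset.filter_subset _ _
      have hbig : (m : ℝ) < (S.card : ℝ) + (Z.card : ℝ) := by
        have : (1 : ℝ) * m < (α + β) * m := by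
          apply mul_lt_mul_of_pos_right hαβ
          exact_mod_cast hm1
        nlinarith [hzero]
      have hbig' : m < S.card + Z.card := by exact_mod_cast hbig
      have hunion : (S ∪ Z).card ≤ m := by
        have := Finset.card_le_card (Finset.union_subset hSsub hZsub)
        simpa [Nat.card_Icc] using this
      have hinter : 0 < (S ∩ Z).card := by
        have := Finset.card_union_add_card_inter S Z
        omega
      obtain ⟨i', hi'⟩ := Finset.card_pos.mp hinter
      rw [Finset.mem_inter] at hi'
      obtain ⟨j, -, hj⟩ := Finset.mem_image.mp hi'.1
      obtain ⟨-, j', hj'⟩ := Finset.mem_filter.mp hi'.2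
      -- first move the pair {x, x+i} to {b j, b (j+i)}
      have hmerge : ∃ w : List Bool,
          autoAct n b w (b (j + (i : ZMod n))) = autoAct n b w (b j) := by
        apply merge_pair_of_cycAbs n b (b (j + (i : ZMod n))) (b j) i'
        · exact hj
        · exact ⟨j', zero_entry i' j' hj'⟩
      obtain ⟨w₂, hw₂⟩ := hmerge
      refine ⟨(List.replicate (j - x).val false ++ [true]) ++ w₂, ?_⟩
      have hc : (((j - x).val : ℕ) : ZMod n) = j - x := ZMod.natCast_rightInverse (j - x)
      have e1 : autoAct n b (List.replicate (j - x).val false ++ [true]) x = b j := by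
        rw [autoAct_append, autoAct_replicate, hc]
        show autoStep n b (x + (j - x)) true = b j
        simp only [autoStep, if_true]
        congr 1; ring
      have e2 : autoAct n b (List.replicate (j - x).val false ++ [true])
          (x + (i : ZMod n)) = b (j + (i : ZMod n)) := by
        rw [autoAct_append, autoAct_replicate, hc]
        show autoStep n b (x + (i : ZMod n) + (j - x)) true = b (j + (i : ZMod n))
        simp only [autoStep, if_true]
        congr 1; ring
      calc autoAct n b ((List.replicate (j - x).val false ++ [true]) ++ w₂) x
          = autoAct n b w₂ (b j) := by rw [autoAct_append, e1]
        _ = autoAct n b w₂ (b (j + (i : ZMod n))) := hw₂.symm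
        _ = autoAct n b ((List.replicate (j - x).val false ++ [true]) ++ w₂)
              (x + (i : ZMod n)) := by rw [autoAct_append, e2]
  -- pair synchronization for arbitrary pairs
  have pair : ∀ p q : ZMod n, ∃ w : List Bool, autoAct n b w p = autoAct n b w q := by
    intro p q
    by_cases hpq : p = q
    · exact ⟨[], by rw [hpq]⟩
    · set i := cycAbs n (q - p) with hi
      have hd : q - p ≠ 0 := sub_ne_zero.mpr (Ne.symm hpq)
      have hi0 : i ≠ 0 := by
        intro h
        apply hd
        apply cycAbs_eq_zero (n := n)
        rw [← hi]; exact h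
      have hi1 : 1 ≤ i := Nat.one_le_iff_ne_zero.mpr hi0
      have hi2 : i ≤ m := by rw [hi]; exact cycAbs_le_half _
      -- get merged shift for i via pairA? No: use merge_pair_of_cycAbs needs merged shift.
      -- Instead: represent the pair as {x, x+i} and use pairA.
      unfold cycAbs at hi
      rcases le_total ((q - p).val) ((-(q - p)).val) with hle | hle
      · have hv : (q - p).val = i := by omega
        have hq : p + (i : ZMod n) = q := by
          rw [← hv, ZMod.natCast_rightInverse (q - p)]; ring
        obtain ⟨w, hw⟩ := pairA p i (Finset.mem_Icc.mpr ⟨hi1, hi2⟩)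
        exact ⟨w, by rw [hw, hq]⟩
      · have hv : (-(q - p)).val = i := by omega
        have hq : q + (i : ZMod n) = p := by
          rw [← hv, ZMod.natCast_rightInverse (-(q - p))]; ring
        obtain ⟨w, hw⟩ := pairA q i (Finset.mem_Icc.mpr ⟨hi1, hi2⟩)
        exact ⟨w, by rw [hw, hq]⟩
  -- collapse any finite set by induction on cardinality
  have collapse : ∀ k : ℕ, ∀ s : Finset (ZMod n), s.card ≤ k →
      ∃ w : List Bool, ∃ q0 : ZMod n, ∀ q ∈ s, autoAct n b w q = q0 := by
    intro k
    induction k with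
    | zero =>
        intro s hs
        refine ⟨[], 0, fun q hq => absurd hq ?_⟩
        simp [Finset.card_eq_zero.mp (Nat.le_zero.mp hs)]
    | succ k ih =>
        intro s hs
        by_cases hcard : s.card ≤ 1
        · rcases Finset.eq_empty_or_nonempty s with rfl | ⟨a, ha⟩
          · exact ⟨[], 0, fun q hq => absurd hq (by simp)⟩
          · refine ⟨[], a, fun q hq => ?_⟩
            have := Finset.card_le_one.mp hcard q hq a ha
            simp [autoAct, this]
        · push_neg at hcard
          obtain ⟨p, hp, q, hq, hpq⟩ := Finset.one_lt_card.mp hcard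
          obtain ⟨w₁, hw₁⟩ := pair p q
          set s' := s.image (autoAct n b w₁) with hs'
          have hlt : s'.card < s.card := by
            rcases lt_or_eq_of_le (Finset.card_image_le (s := s) (f := autoAct n b w₁))
              with h | h
            · exact h
            · exfalso
              have hinj := Finset.card_image_iff.mp h
              exact hpq (hinj hp hq hw₁)
          obtain ⟨w₂, q0, hw₂⟩ := ih s' (by omega)
          refine ⟨w₁ ++ w₂, q0, fun q hqs => ?_⟩
          rw [autoAct_append]
          exact hw₂ _ (Finset.mem_image_of_mem _ hqs)
  obtain ⟨w, q0, hw⟩ := collapse (Finset.univ : Finset (ZMod n)).card Finset.univ le_rfl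
  exact ⟨w, q0, fun q => hw q (Finset.mem_univ q)⟩
end
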